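/- Let H(s) be a continuously differentiable path of Hermitian matrices, λ_0(s) an eigenvalue with spectral projector P(s) onto its eigenspace (of locally constant rank), and suppose the rest of the spectrum is at distance at least g(s) > 0 from λ_0(s). Then ‖P'(s)‖ ≤ 2‖H'(s)‖/g(s). -/

import Mathlib

private lemma aux_ring {R : Type*} [Ring R] [Module ℂ R] [SMulCommClass ℂ R R] [IsScalarTower ℂ R R]
    (a d h h' : R) (c : ℂ)
    (ha : a * a = a)
    (hha : h * a = c • a)
    (hah : a * h = c • a)
    (hd : d = d * a + a * d)
    (heq : (0 - d) * (h * a) + (1 - a) * (h' * a + h * d) = 0) :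
    a * d * a = 0 ∧
    d = (1 - a) * d * a + a * d * (1 - a) ∧
    h * ((1 - a) * d * a) - c • ((1 - a) * d * a) = -((1 - a) * (h' * a)) := by
  have haa : ∀ x : R, a * (a * x) = a * x := fun x => by rw [← mul_assoc, ha]
  have hada : a * d * a = 0 := by
    have e1 : a * d * a = a * d * a + a * d * a := by
      conv_lhs => rw [hd]
      simp only [mul_add, add_mul, mul_assoc, haa, ha]
    exact add_eq_left.mp e1.symm
  have hX' : (1 - a) * d * a = d * a := by
    rw [sub_mul, one_mul, sub_mul, hada, sub_zero]
  have hY' : a * d * (1 - a) = a * d := by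
    rw [mul_sub, mul_one, hada, sub_zero]
  refine ⟨hada, ?_, ?_⟩
  · rw [hX', hY']; exact hd
  · have e2 : (1 - a) * (h' * a) + (1 - a) * (h * d) = d * (h * a) := by
      have h5 := heq
      rw [zero_sub, neg_mul, neg_add_eq_zero, mul_add] at h5
      exact h5.symm
    have e3 : (1 - a) * (h' * a) * a + (1 - a) * (h * d) * a = d * (h * a) * a := by
      have h6 := congrArg (fun r => r * a) e2
      simpa only [add_mul] using h6
    have r1 : (1 - a) * (h' * a) * a = (1 - a) * (h' * a) := by
      conv_lhs => rw [mul_assoc, mul_assoc, ha]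
    have r2 : (1 - a) * (h * d) * a = h * (d * a) := by
      conv_lhs => rw [sub_mul, one_mul, ← mul_assoc a h d, hah, smul_mul_assoc, sub_mul,
        smul_mul_assoc, mul_assoc a d a]
      -- now : h * d * a - c • (a * (d * a))
      rw [← mul_assoc a d a, hada, smul_zero, sub_zero, mul_assoc]
    have r3 : d * (h * a) * a = c • (d * a) := by
      conv_lhs => rw [mul_assoc, mul_assoc, ha]
      rw [hha, mul_smul_comm]
    rw [r1, r2, r3] at e3
    rw [hX']
    have e5 : (1 - a) * (h' * a) + (h * (d * a) - c • (d * a)) = 0 := by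
      rw [← e3]; abel
    exact eq_neg_of_add_eq_zero_right e5

open ContinuousLinearMap in
private lemma aux_proj_le {E : Type*} [NormedAddCommGroup E] [InnerProductSpace ℂ E]
    [CompleteSpace E] (Pr : E →L[ℂ] E)
    (hsa : ContinuousLinearMap.adjoint Pr = Pr) (hidem : Pr * Pr = Pr) (v : E) :
    ‖Pr v‖ ≤ ‖v‖ := by
  have h1 : ‖Pr v‖ ^ 2 = RCLike.re (inner ℂ (Pr v) (Pr v) : ℂ) :=
    (inner_self_eq_norm_sq _).symm
  have h2 : (inner ℂ (Pr v) (Pr v) : ℂ) = inner ℂ v (Pr v) := by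
    nth_rewrite 1 [← hsa]
    rw [ContinuousLinearMap.adjoint_inner_left, ← ContinuousLinearMap.mul_apply, hidem]
  have h3 : RCLike.re (inner ℂ v (Pr v) : ℂ) ≤ ‖v‖ * ‖Pr v‖ := by
    calc RCLike.re (inner ℂ v (Pr v) : ℂ) ≤ ‖(inner ℂ v (Pr v) : ℂ)‖ := RCLike.re_le_norm _
    _ ≤ ‖v‖ * ‖Pr v‖ := norm_inner_le_norm _ _
  have h4 : ‖Pr v‖ ^ 2 ≤ ‖v‖ * ‖Pr v‖ := by rw [h1, h2]; exact h3
  nlinarith [norm_nonneg (Pr v), norm_nonneg v]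

private lemma aux_gap {n : ℕ}
    (T Pr : EuclideanSpace ℂ (Fin n) →L[ℂ] EuclideanSpace ℂ (Fin n))
    (hT : ContinuousLinearMap.adjoint T = T)
    (hPsa : ContinuousLinearMap.adjoint Pr = Pr)
    (lam g : ℝ) (hg : 0 < g)
    (hfull : ∀ v, T v = lam • v → Pr v = v)
    (hgap : ∀ μ ∈ spectrum ℂ T, μ ≠ (lam : ℂ) → g ≤ ‖μ - (lam : ℂ)‖)
    (w : EuclideanSpace ℂ (Fin n)) (hw : Pr w = 0) :
    g * ‖w‖ ≤ ‖T w - lam • w‖ := by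
  have hsym : (T : EuclideanSpace ℂ (Fin n) →ₗ[ℂ] EuclideanSpace ℂ (Fin n)).IsSymmetric := by
    rw [← ContinuousLinearMap.isSelfAdjoint_iff_isSymmetric]
    rw [IsSelfAdjoint, ContinuousLinearMap.star_eq_adjoint]
    exact hT
  have hn : Module.finrank ℂ (EuclideanSpace ℂ (Fin n)) = n := finrank_euclideanSpace_fin
  set b := hsym.eigenvectorBasis hn with hb
  set μ := hsym.eigenvalues hn with hμ
  have happly : ∀ i, T (b i) = (μ i : ℂ) • b i := fun i => hsym.apply_eigenvectorBasis hn i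
  -- coordinates of u := T w - lam • w
  have hsmul : ∀ (r : ℝ) (x : EuclideanSpace ℂ (Fin n)), (r : ℂ) • x = r • x := fun r x => by
    rw [← algebraMap_smul ℂ r x, Complex.coe_algebraMap]
  set u := T w - lam • w with hu
  have hrepr : ∀ i, b.repr u i = ((μ i : ℂ) - (lam : ℂ)) * b.repr w i := by
    intro i
    rw [OrthonormalBasis.repr_apply_apply, OrthonormalBasis.repr_apply_apply, hu]
    rw [inner_sub_right, ← hsmul lam w, inner_smul_right]
    have h1 : (inner ℂ (b i) (T w) : ℂ) = (μ i : ℂ) * inner ℂ (b i) w := by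
      have h0 := (hsym (b i) w).symm
      simp only [ContinuousLinearMap.coe_coe] at h0
      rw [happly i, inner_smul_left, Complex.conj_ofReal] at h0
      exact h0
    rw [h1]
    push_cast
    ring
  -- per-coordinate bound
  have hcoord : ∀ i, g * ‖b.repr w i‖ ≤ ‖b.repr u i‖ := by
    intro i
    rcases eq_or_ne ((μ i : ℂ)) ((lam : ℂ)) with he | hne
    · -- eigenvector for lam: coordinate of w vanishes
      have hb_eig : T (b i) = lam • b i := by
        rw [happly i, he, hsmul]
      have hPb : Pr (b i) = b i := hfull (b i) hb_eig
      have hzero : b.repr w i = 0 := by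
        rw [OrthonormalBasis.repr_apply_apply, ← hPb]
        nth_rewrite 1 [← hPsa]
        rw [ContinuousLinearMap.adjoint_inner_left, hw, inner_zero_right]
      rw [hzero, hrepr i, hzero]
      simp
    · -- spectral gap
      have hspec : (μ i : ℂ) ∈ spectrum ℂ T := by
        rw [spectrum.mem_iff]
        intro hunit
        have hbne : b i ≠ 0 := by
          have := b.orthonormal.1 i
          intro h0
          rw [h0, norm_zero] at this
          norm_num at this
        obtain ⟨v, hv⟩ := hunit
        have hker : ((algebraMap ℂ (EuclideanSpace ℂ (Fin n) →L[ℂ] EuclideanSpace ℂ (Fin n))) (μ i : ℂ) - T) (b i) = 0 := by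
          simp [ContinuousLinearMap.sub_apply, happly i,
            Module.algebraMap_end_apply]
        apply hbne
        calc b i = ((v.inv * v.val : _) : _) (b i) := by rw [v.inv_val]; simp
        _ = (v.inv : _) ((v.val : _) (b i)) := by rw [ContinuousLinearMap.mul_apply]
        _ = 0 := by rw [hv, hker, map_zero]
      have hgi := hgap _ hspec hne
      rw [hrepr i, norm_mul]
      exact mul_le_mul_of_nonneg_right hgi (norm_nonneg _)
  -- sum up
  have hsum : (g * ‖w‖) ^ 2 ≤ ‖u‖ ^ 2 := by
    rw [← b.repr.norm_map w, ← b.repr.norm_map u]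
    rw [EuclideanSpace.norm_eq, EuclideanSpace.norm_eq]
    rw [Real.sq_sqrt (by positivity), mul_pow, Real.sq_sqrt (by positivity)]
    rw [Finset.mul_sum]
    apply Finset.sum_le_sum
    intro i _
    have := hcoord i
    have h2 : (g * ‖b.repr w i‖) ^ 2 ≤ ‖b.repr u i‖ ^ 2 := by
      apply sq_le_sq' <;> nlinarith [norm_nonneg (b.repr w i), norm_nonneg (b.repr u i)]
    calc g ^ 2 * ‖b.repr w i‖ ^ 2 = (g * ‖b.repr w i‖) ^ 2 := by ring
    _ ≤ ‖b.repr u i‖ ^ 2 := h2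
  have h3 : 0 ≤ g * ‖w‖ := by positivity
  nlinarith [norm_nonneg u]

set_option maxHeartbeats 1000000 in
set_option synthInstance.maxHeartbeats 1000000 in
/-- **First derivative bound on the spectral projector.** Let `H(s)` be a continuously
differentiable path of Hermitian operators, `λ₀(s)` an eigenvalue with spectral
projector `P(s)` onto its eigenspace, and suppose the rest of the spectrum of `H(s)`
is at distance at least `g(s) > 0` from `λ₀(s)`. Then `‖P'(s)‖ ≤ 2‖H'(s)‖/g(s)`. -/
theorem spectral_projector_deriv_bound {n : ℕ}
    (H H' P P' : ℝ → (EuclideanSpace ℂ (Fin n) →L[ℂ] EuclideanSpace ℂ (Fin n)))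
    (lam0 g : ℝ → ℝ)
    (hHderiv : ∀ s, HasDerivAt H (H' s) s)
    (hH'cont : Continuous H')
    (hHsa : ∀ s, ContinuousLinearMap.adjoint (H s) = H s)
    (hPsa : ∀ s, ContinuousLinearMap.adjoint (P s) = P s)
    (hPidem : ∀ s, P s ∘L P s = P s)
    (hPderiv : ∀ s, HasDerivAt P (P' s) s)
    (heig : ∀ s, H s ∘L P s = lam0 s • P s)
    (hfull : ∀ s, ∀ v, H s v = lam0 s • v → P s v = v)
    (hg : ∀ s, 0 < g s)
    (hgap : ∀ s, ∀ μ ∈ spectrum ℂ (H s), μ ≠ (lam0 s : ℂ) → g s ≤ ‖μ - (lam0 s : ℂ)‖)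
    (s : ℝ) :
    ‖P' s‖ ≤ 2 * ‖H' s‖ / g s := by
  have hsmulC : ∀ (r : ℝ) (A : EuclideanSpace ℂ (Fin n) →L[ℂ] EuclideanSpace ℂ (Fin n)),
      r • A = (r : ℂ) • A := fun r A => by
    rw [← algebraMap_smul ℂ r A, Complex.coe_algebraMap]
  have hsmulE : ∀ (r : ℝ) (x : EuclideanSpace ℂ (Fin n)), (r : ℂ) • x = r • x := fun r x => by
    rw [← algebraMap_smul ℂ r x, Complex.coe_algebraMap]
  -- star of P' s
  have hsP : star (P s) = P s := by
    rw [ContinuousLinearMap.star_eq_adjoint]; exact hPsa s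
  have hstar1 : HasDerivAt (fun t => star (P t)) (star (P' s)) s := (hPderiv s).star
  have hPfun : (fun t => star (P t)) = P := funext fun t => by
    rw [ContinuousLinearMap.star_eq_adjoint, hPsa t]
  rw [hPfun] at hstar1
  have hP'sa : star (P' s) = P' s := hstar1.unique (hPderiv s)
  -- P' = P'P + PP'
  have hPP : HasDerivAt (fun t => P t * P t) (P' s * P s + P s * P' s) s :=
    (hPderiv s).mul (hPderiv s)
  have hPPfun : (fun t => P t * P t) = P := funext fun t => by
    rw [ContinuousLinearMap.mul_def]; exact hPidem t
  rw [hPPfun] at hPP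
  have hd : P' s = P' s * P s + P s * P' s := (hPderiv s).unique hPP
  -- derivative of (1 - P) H P = 0
  have hQd : HasDerivAt (fun t => (1 : EuclideanSpace ℂ (Fin n) →L[ℂ] EuclideanSpace ℂ (Fin n)) - P t)
      (0 - P' s) s := (hasDerivAt_const s 1).sub (hPderiv s)
  have hHP : HasDerivAt (fun t => H t * P t) (H' s * P s + H s * P' s) s :=
    (hHderiv s).mul (hPderiv s)
  have hF := hQd.mul hHP
  have hFzero : ∀ t, ((1 : EuclideanSpace ℂ (Fin n) →L[ℂ] EuclideanSpace ℂ (Fin n)) - P t) *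
      (H t * P t) = 0 := by
    intro t
    rw [ContinuousLinearMap.mul_def (H t), heig t, hsmulC, mul_smul_comm, sub_mul, one_mul,
      ContinuousLinearMap.mul_def, hPidem t, sub_self]
    ext v; simp
  have hF0 : HasDerivAt (fun _ : ℝ => (0 : EuclideanSpace ℂ (Fin n) →L[ℂ] EuclideanSpace ℂ (Fin n)))
      ((0 - P' s) * (H s * P s) +
        ((1 : EuclideanSpace ℂ (Fin n) →L[ℂ] EuclideanSpace ℂ (Fin n)) - P s) *
          (H' s * P s + H s * P' s)) s :=
    hF.congr_of_eventuallyEq (Filter.Eventually.of_forall fun t => (hFzero t).symm)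
  have heq0 : (0 - P' s) * (H s * P s) +
      ((1 : EuclideanSpace ℂ (Fin n) →L[ℂ] EuclideanSpace ℂ (Fin n)) - P s) * (H' s * P s + H s * P' s) = 0 :=
    hF0.unique (hasDerivAt_const s 0)
  have ha : P s * P s = P s := by rw [ContinuousLinearMap.mul_def]; exact hPidem s
  have hha : H s * P s = (lam0 s : ℂ) • P s := by
    rw [ContinuousLinearMap.mul_def, heig s]; exact hsmulC _ _
  have hah : P s * H s = (lam0 s : ℂ) • P s := by
    have h0 := congrArg star hha
    rw [star_mul, hsP, ContinuousLinearMap.star_eq_adjoint, hHsa s, star_smul,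
      Complex.star_def, Complex.conj_ofReal, hsP] at h0
    exact h0
  obtain ⟨hada, hsplit, hkey⟩ := aux_ring (P s) (P' s) (H s) (H' s) ((lam0 s : ℂ)) ha hha hah hd heq0
  set X := (1 - P s) * P' s * P s with hX
  have hQsa : ContinuousLinearMap.adjoint (1 - P s) = 1 - P s := by
    rw [map_sub, hPsa s]
    congr 1
    exact ContinuousLinearMap.adjoint_id
  have hsQ : star (1 - P s) = 1 - P s := by
    rw [ContinuousLinearMap.star_eq_adjoint]; exact hQsa
  have hstarX : star X = P s * P' s * (1 - P s) := by
    rw [hX, star_mul, star_mul, hsP, hP'sa, hsQ, ← mul_assoc]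
  have hQidem : (1 - P s) * (1 - P s) = 1 - P s := by
    rw [sub_mul, one_mul, mul_sub, mul_one, ha]
    abel
  have hXbound : ‖X‖ ≤ ‖H' s‖ / g s := by
    apply ContinuousLinearMap.opNorm_le_bound _ (div_nonneg (norm_nonneg _) (hg s).le)
    intro v
    have hPQ : P s * (1 - P s) = 0 := by rw [mul_sub, mul_one, ha, sub_self]
    have hPX : P s * X = 0 := by
      rw [hX, ← mul_assoc, ← mul_assoc, hPQ, zero_mul, zero_mul]
    have hXv0 : P s (X v) = 0 := by
      rw [← ContinuousLinearMap.mul_apply, hPX, ContinuousLinearMap.zero_apply]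
    have hgap2 := aux_gap (H s) (P s) (hHsa s) (hPsa s) (lam0 s) (g s) (hg s) (hfull s) (hgap s)
      (X v) hXv0
    have hkeyv : H s (X v) - lam0 s • (X v) = -(((1 - P s) * (H' s * P s)) v) := by
      have h7 := congrArg (fun (A : EuclideanSpace ℂ (Fin n) →L[ℂ] EuclideanSpace ℂ (Fin n)) => A v) hkey
      simp only [ContinuousLinearMap.sub_apply, ContinuousLinearMap.smul_apply,
        ContinuousLinearMap.mul_apply, ContinuousLinearMap.neg_apply] at h7
      rw [hsmulE] at h7
      simp only [ContinuousLinearMap.mul_apply] at h7 ⊢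
      exact h7
    have hb1 : ‖H s (X v) - lam0 s • (X v)‖ ≤ ‖H' s‖ * ‖v‖ := by
      rw [hkeyv, norm_neg]
      calc ‖(((1 - P s) * (H' s * P s))) v‖ = ‖(1 - P s) ((H' s) (P s v))‖ := by
            rw [ContinuousLinearMap.mul_apply, ContinuousLinearMap.mul_apply]
      _ ≤ ‖(H' s) (P s v)‖ := aux_proj_le (1 - P s) hQsa hQidem _
      _ ≤ ‖H' s‖ * ‖P s v‖ := (H' s).le_opNorm _
      _ ≤ ‖H' s‖ * ‖v‖ := mul_le_mul_of_nonneg_left (aux_proj_le (P s) (hPsa s) ha v) (norm_nonneg _)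
    have hcomb : g s * ‖X v‖ ≤ ‖H' s‖ * ‖v‖ := le_trans hgap2 hb1
    rw [div_mul_eq_mul_div, le_div_iff₀ (hg s)]
    calc ‖X v‖ * g s = g s * ‖X v‖ := mul_comm _ _
    _ ≤ ‖H' s‖ * ‖v‖ := hcomb
  have hnorm_star : ‖star X‖ = ‖X‖ := by
    rw [ContinuousLinearMap.star_eq_adjoint]
    exact ContinuousLinearMap.adjoint.norm_map X
  have hsplit' : P' s = X + star X := by rw [hstarX]; exact hsplit
  calc ‖P' s‖ = ‖X + star X‖ := by rw [← hsplit']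
  _ ≤ ‖X‖ + ‖star X‖ := norm_add_le _ _
  _ = ‖X‖ + ‖X‖ := by rw [hnorm_star]
  _ ≤ ‖H' s‖ / g s + ‖H' s‖ / g s := by linarith [hXbound]
  _ = 2 * ‖H' s‖ / g s := by ring
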